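/- arXiv:1912.07993 — 3 statements merged into one kernel-verified Lean document; each statement's English description precedes it below -/
import Mathlib

section
/- Let K, L ⊆ ℝⁿ be convex bodies and let λ ∈ (0,1). Then W((1−λ)K + λL)^{1/n} ≥ (1/(n!)^{1/n}) · ((1−λ)·W(K)^{1/n} + λ·W(L)^{1/n}). -/
open scoped Pointwise ENNReal NNReal
open MeasureTheory Metric Real

/-- The Wills functional `W(K) = ∫_{ℝⁿ} e^{-π d(x,K)²} dx`. -/
noncomputable def wills {n : ℕ} (K : Set (EuclideanSpace ℝ (Fin n))) : ℝ :=
  ∫ x, Real.exp (-π * (Metric.infDist x K) ^ 2)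

namespace WillsAux

variable {n : ℕ}

local notation "𝔼" => EuclideanSpace ℝ (Fin n)

/-- The integrand of the Wills functional. -/
noncomputable def wf (X : Set 𝔼) (x : 𝔼) : ℝ :=
  Real.exp (-π * (Metric.infDist x X) ^ 2)

lemma wf_pos (X : Set 𝔼) (x : 𝔼) : 0 < wf X x := Real.exp_pos _

lemma wf_le_one (X : Set 𝔼) (x : 𝔼) : wf X x ≤ 1 := by
  rw [wf, Real.exp_le_one_iff]
  nlinarith [Real.pi_pos, sq_nonneg (infDist x X)]

lemma wf_continuous (X : Set 𝔼) : Continuous (wf X) :=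
  Real.continuous_exp.comp (continuous_const.mul ((continuous_infDist_pt X).pow 2))

/-- The Wills functional as a lower integral. -/
noncomputable def willsL (X : Set 𝔼) : ℝ≥0∞ :=
  ∫⁻ x, ENNReal.ofReal (wf X x)

lemma wills_eq_toReal (X : Set 𝔼) : wills X = (willsL X).toReal := by
  rw [wills, willsL]
  exact integral_eq_lintegral_of_nonneg_ae (ae_of_all _ fun x => (wf_pos X x).le)
    (wf_continuous X).aestronglyMeasurable

/-- Layer-cake representation. -/
lemma willsL_eq_layer (X : Set 𝔼) :
    willsL X = ∫⁻ t in Set.Ioi (0:ℝ), volume {x : 𝔼 | t ≤ wf X x} :=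
  lintegral_eq_lintegral_meas_le volume (ae_of_all _ fun x => (wf_pos X x).le)
    (wf_continuous X).measurable.aemeasurable

/-- The sublevel sets of the distance are the Minkowski sums with closed balls. -/
lemma infDist_le_iff_mem_add {X : Set 𝔼} (hXc : IsCompact X) (hX0 : X.Nonempty)
    {ρ : ℝ} {x : 𝔼} : infDist x X ≤ ρ ↔ x ∈ X + Metric.closedBall 0 ρ := by
  constructor
  · intro h
    obtain ⟨y, hy, hxy⟩ := hXc.exists_infDist_eq_dist hX0 x
    refine ⟨y, hy, x - y, ?_, by module⟩
    rw [mem_closedBall_zero_iff, ← dist_eq_norm, ← hxy]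
    exact h
  · rintro ⟨y, hy, w, hw, rfl⟩
    refine le_trans (infDist_le_dist_of_mem hy) ?_
    rw [mem_closedBall_zero_iff] at hw
    simpa [dist_eq_norm, add_sub_cancel_left] using hw

/-- Level sets of the Wills integrand. -/
lemma levelSet_eq {X : Set 𝔼} (hXc : IsCompact X) (hX0 : X.Nonempty)
    {t : ℝ} (ht0 : 0 < t) (ht1 : t ≤ 1) :
    {x : 𝔼 | t ≤ wf X x} = X + Metric.closedBall 0 (Real.sqrt (Real.log t⁻¹ / π)) := by
  ext x
  have hd0 : 0 ≤ infDist x X := infDist_nonneg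
  have hlog : 0 ≤ Real.log t⁻¹ / π := by
    apply div_nonneg _ Real.pi_pos.le
    rw [Real.log_inv]
    simpa using Real.log_nonpos ht0.le ht1
  have hiff : t ≤ wf X x ↔ infDist x X ≤ Real.sqrt (Real.log t⁻¹ / π) := by
    rw [wf, ← Real.log_le_iff_le_exp ht0, Real.le_sqrt hd0 hlog, Real.log_inv,
      le_div_iff₀ Real.pi_pos]
    constructor
    · intro h; nlinarith
    · intro h; nlinarith
  rw [Set.mem_setOf_eq, hiff, infDist_le_iff_mem_add hXc hX0]

/-- The key elementary "touching" inequality: volumes are superadditive under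
Minkowski sum, for nonempty compact sets (in positive dimension). -/
lemma volume_add_volume_le (hn : n ≠ 0) {A B : Set 𝔼}
    (hA : IsCompact A) (hB : IsCompact B) (hA0 : A.Nonempty) (hB0 : B.Nonempty) :
    volume A + volume B ≤ volume (A + B) := by
  have i : Fin n := ⟨0, Nat.pos_of_ne_zero hn⟩
  set u : 𝔼 := EuclideanSpace.single i 1 with hu
  have hu1 : ‖u‖ = 1 := by simp [hu, EuclideanSpace.norm_single]
  set φ : 𝔼 → ℝ := fun x => inner ℝ u x with hφ
  have hφc : Continuous φ := Continuous.inner continuous_const continuous_id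
  obtain ⟨a, haA, ha⟩ := hA.exists_isMaxOn hA0 hφc.continuousOn
  obtain ⟨b, hbB, hb⟩ := hB.exists_isMinOn hB0 hφc.continuousOn
  set A' : Set 𝔼 := (fun x => b + x) '' A with hA'
  set B' : Set 𝔼 := (fun x => a + x) '' B with hB'
  have hsub1 : A' ⊆ A + B := by
    rintro _ ⟨x, hx, rfl⟩
    exact ⟨x, hx, b, hbB, by abel⟩
  have hsub2 : B' ⊆ A + B := by
    rintro _ ⟨x, hx, rfl⟩
    exact ⟨a, haA, x, hx, rfl⟩
  -- the intersection lies in a hyperplane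
  have hinter : A' ∩ B' ⊆ {x : 𝔼 | φ x = φ b + φ a} := by
    rintro x ⟨⟨p, hp, rfl⟩, ⟨q, hq, hq'⟩⟩
    have h1 : φ p ≤ φ a := ha hp
    have h2 : φ b ≤ φ q := hb hq
    have e1 : φ (b + p) = φ b + φ p := inner_add_right u b p
    have e2 : φ (a + q) = φ a + φ q := inner_add_right u a q
    have hq2 : a + q = b + p := hq'
    rw [hq2] at e2
    show φ (b + p) = φ b + φ a
    linarith
  -- the hyperplane has measure zero
  have hplane : volume {x : 𝔼 | φ x = φ b + φ a} = 0 := by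
    set c : ℝ := φ b + φ a
    set S : Submodule ℝ 𝔼 := LinearMap.ker ((innerSL ℝ u : 𝔼 →L[ℝ] ℝ) : 𝔼 →ₗ[ℝ] ℝ) with hS
    have hSne : S ≠ ⊤ := by
      intro h
      have hu_mem : u ∈ S := h ▸ Submodule.mem_top
      have h0 : (inner ℝ u u : ℝ) = 0 := hu_mem
      rw [real_inner_self_eq_norm_sq, hu1] at h0
      norm_num at h0
    have hset : {x : 𝔼 | φ x = c} = (fun x => -(c • u) + x) ⁻¹' (S : Set 𝔼) := by
      ext x
      simp only [Set.mem_setOf_eq, Set.mem_preimage, SetLike.mem_coe, hS,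
        LinearMap.mem_ker, ContinuousLinearMap.coe_coe]
      have : ((innerSL ℝ u : 𝔼 →L[ℝ] ℝ) (-(c • u) + x) : ℝ) = inner ℝ u x - c := by
        simp only [innerSL_apply_apply, inner_add_right, inner_neg_right, real_inner_smul_right,
          real_inner_self_eq_norm_sq, hu1]
        ring
      rw [this]
      constructor
      · intro h; simp only [hφ] at h; rw [h]; ring
      · intro h; simp only [hφ]; linarith
    rw [hset, measure_preimage_add]
    exact Measure.addHaar_submodule volume S hSne
  -- conclude
  have hmeasB' : MeasurableSet B' := ((hB.image (continuous_add_left a))).isClosed.measurableSet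
  have hint0 : volume (A' ∩ B') = 0 := measure_mono_null hinter hplane
  have key := measure_union_add_inter (μ := volume) A' hmeasB'
  have hvolA : volume A' = volume A := by
    have h : A' = (fun x => -b + x) ⁻¹' A := by
      ext x
      simp only [hA', Set.mem_image, Set.mem_preimage]
      constructor
      · rintro ⟨p, hp, rfl⟩; simpa using hp
      · intro hx; exact ⟨-b + x, hx, by abel⟩
    rw [h, measure_preimage_add]
  have hvolB : volume B' = volume B := by
    have h : B' = (fun x => -a + x) ⁻¹' B := by
      ext x
      simp only [hB', Set.mem_image, Set.mem_preimage]
      constructor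
      · rintro ⟨p, hp, rfl⟩; simpa using hp
      · intro hx; exact ⟨-a + x, hx, by abel⟩
    rw [h, measure_preimage_add]
  calc volume A + volume B = volume A' + volume B' := by rw [hvolA, hvolB]
    _ = volume (A' ∪ B') + volume (A' ∩ B') := key.symm
    _ = volume (A' ∪ B') := by rw [hint0, add_zero]
    _ ≤ volume (A + B) := measure_mono (Set.union_subset hsub1 hsub2)

/-- Distributing a convex combination over Minkowski sums with a common ball. -/
lemma smul_add_cball {f l ρ : ℝ} (hf : 0 ≤ f) (hl : 0 ≤ l) (hfl : f + l = 1)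
    (K L : Set 𝔼) :
    f • (K + Metric.closedBall 0 ρ) + l • (L + Metric.closedBall 0 ρ) =
      (f • K + l • L) + Metric.closedBall 0 ρ := by
  ext x
  constructor
  · rintro ⟨_, ⟨y, ⟨k, hk, u, hu, rfl⟩, rfl⟩, _, ⟨z, ⟨m, hm, v, hv, rfl⟩, rfl⟩, rfl⟩
    refine ⟨f • k + l • m, ⟨_, ⟨k, hk, rfl⟩, _, ⟨m, hm, rfl⟩, rfl⟩, f • u + l • v, ?_,
      by module⟩
    rw [mem_closedBall_zero_iff] at hu hv ⊢
    calc ‖f • u + l • v‖ ≤ ‖f • u‖ + ‖l • v‖ := norm_add_le _ _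
      _ = f * ‖u‖ + l * ‖v‖ := by
          rw [norm_smul, norm_smul, Real.norm_of_nonneg hf, Real.norm_of_nonneg hl]
      _ ≤ f * ρ + l * ρ := by
          have hρ : 0 ≤ ρ := le_trans (norm_nonneg u) hu
          gcongr
      _ = ρ := by rw [← add_mul, hfl, one_mul]
  · rintro ⟨_, ⟨_, ⟨k, hk, rfl⟩, _, ⟨m, hm, rfl⟩, rfl⟩, w, hw, rfl⟩
    exact ⟨f • (k + w), ⟨k + w, ⟨k, hk, w, hw, rfl⟩, rfl⟩,
      l • (m + w), ⟨m + w, ⟨m, hm, w, hw, rfl⟩, rfl⟩, by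
        show f • (k + w) + l • (m + w) = f • k + l • m + w
        have h1 : f • (k + w) + l • (m + w) = f • k + l • m + (f + l) • w := by module
        rw [h1, hfl, one_smul]⟩

end WillsAux

namespace WillsAux

variable {n : ℕ}

local notation "𝔼" => EuclideanSpace ℝ (Fin n)

/-- Gaussian-type functions are integrable on Euclidean space. -/
lemma integrable_gauss (b : ℝ) (hb : 0 < b) :
    Integrable (fun x : 𝔼 => Real.exp (-b * ‖x‖ ^ 2)) := by
  have h1 : Integrable (fun x : ℝ => Real.exp (-b * x ^ 2)) := integrable_exp_neg_mul_sq hb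
  have hp : Integrable (fun y : Fin n → ℝ => ∏ i : Fin n, Real.exp (-b * y i ^ 2)) :=
    Integrable.fintype_prod (f := fun _ : Fin n => fun x : ℝ => Real.exp (-b * x ^ 2))
      (fun _ => h1)
  have hp2 : Integrable ((fun y : Fin n → ℝ => ∏ i, Real.exp (-b * y i ^ 2)) ∘
      (MeasurableEquiv.toLp 2 (Fin n → ℝ)).symm) :=
    ((EuclideanSpace.volume_preserving_symm_measurableEquiv_toLp (Fin n)).integrable_comp_emb
      (MeasurableEquiv.measurableEmbedding _)).mpr hp
  have hkey : (fun x : 𝔼 => Real.exp (-b * ‖x‖ ^ 2)) =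
      ((fun y : Fin n → ℝ => ∏ i, Real.exp (-b * y i ^ 2)) ∘
        (MeasurableEquiv.toLp 2 (Fin n → ℝ)).symm) := by
    funext x
    have hnorm : ‖x‖ ^ 2 = ∑ i, (x i) ^ 2 := by
      rw [EuclideanSpace.norm_eq, Real.sq_sqrt (by positivity)]
      simp [Real.norm_eq_abs, sq_abs]
    simp only [Function.comp_apply]
    rw [← Real.exp_sum]
    have happ : ∀ i, (MeasurableEquiv.toLp 2 (Fin n → ℝ)).symm x i = x i := fun i => rfl
    simp only [happ]
    congr 1
    rw [hnorm, Finset.mul_sum]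
  rw [hkey]
  exact hp2

/-- Finiteness of the Wills functional. -/
lemma willsL_lt_top {X : Set 𝔼} (hXc : IsCompact X) (hX0 : X.Nonempty) :
    willsL X < ⊤ := by
  obtain ⟨R, hR⟩ := hXc.isBounded.subset_closedBall 0
  obtain ⟨k₀, hk₀⟩ := hX0
  have hR0 : 0 ≤ R := le_trans (norm_nonneg k₀) (by simpa using hR hk₀)
  have hbound : ∀ x : 𝔼, wf X x ≤ Real.exp (π * R ^ 2) * Real.exp (-(π/2) * ‖x‖ ^ 2) := by
    intro x
    rw [wf, ← Real.exp_add]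
    apply Real.exp_le_exp.2
    have hd : ‖x‖ - R ≤ infDist x X := by
      obtain ⟨y, hy, hxy⟩ := hXc.exists_infDist_eq_dist ⟨k₀, hk₀⟩ x
      have hyR : ‖y‖ ≤ R := by simpa using hR hy
      have h1 : ‖x‖ - ‖y‖ ≤ ‖x - y‖ := norm_sub_norm_le x y
      rw [hxy, dist_eq_norm]
      linarith
    have hd0 : 0 ≤ infDist x X := infDist_nonneg
    rcases le_or_gt ‖x‖ R with h | h
    · nlinarith [mul_nonneg Real.pi_pos.le (sq_nonneg (infDist x X)),
        mul_le_mul_of_nonneg_left (pow_le_pow_left₀ (norm_nonneg x) h 2) Real.pi_pos.le,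
        mul_nonneg Real.pi_pos.le (sq_nonneg R)]
    · have h2 : (‖x‖ - R) ^ 2 ≤ infDist x X ^ 2 := by nlinarith
      nlinarith [mul_le_mul_of_nonneg_left h2 Real.pi_pos.le,
        mul_nonneg Real.pi_pos.le (sq_nonneg (‖x‖ - 2 * R))]
  have hi : Integrable (fun x : 𝔼 => Real.exp (π * R ^ 2) * Real.exp (-(π/2) * ‖x‖ ^ 2)) :=
    (integrable_gauss (π/2) (by positivity)).const_mul _
  calc willsL X ≤ ∫⁻ x : 𝔼, ENNReal.ofReal
        (Real.exp (π * R ^ 2) * Real.exp (-(π/2) * ‖x‖ ^ 2)) :=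
        lintegral_mono fun x => ENNReal.ofReal_le_ofReal (hbound x)
    _ ≤ ∫⁻ x : 𝔼, ‖Real.exp (π * R ^ 2) * Real.exp (-(π/2) * ‖x‖ ^ 2)‖ₑ :=
        lintegral_mono fun x => Real.ofReal_le_enorm _
    _ < ⊤ := hi.hasFiniteIntegral

/-- The central inequality, at the level of lower integrals:
`W((1-l)K + lL) ≥ (1-l)^n W(K) + l^n W(L)`. -/
lemma willsL_combo (hn : n ≠ 0) {K L : Set 𝔼} (hK₁ : IsCompact K) (hK₃ : K.Nonempty)
    (hL₁ : IsCompact L) (hL₃ : L.Nonempty) {l : ℝ} (hl0 : 0 < l) (hl1 : l < 1) :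
    ENNReal.ofReal ((1 - l) ^ n) * willsL K + ENNReal.ofReal (l ^ n) * willsL L ≤
      willsL ((1 - l) • K + l • L) := by
  have hf0 : (0:ℝ) < 1 - l := by linarith
  set M : Set 𝔼 := (1 - l) • K + l • L with hM
  have hM₁ : IsCompact M := ((hK₁.smul (1 - l)).add (hL₁.smul l))
  have hM₃ : M.Nonempty := (hK₃.smul_set).add (hL₃.smul_set)
  -- the pointwise (in `t`) inequality between the level-set volumes
  have hpt : ∀ t : ℝ,
      ENNReal.ofReal ((1 - l) ^ n) * volume {x : 𝔼 | t ≤ wf K x} +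
        ENNReal.ofReal (l ^ n) * volume {x : 𝔼 | t ≤ wf L x} ≤
        volume {x : 𝔼 | t ≤ wf M x} := by
    intro t
    have hcsum : ENNReal.ofReal ((1 - l) ^ n) + ENNReal.ofReal (l ^ n) ≤ 1 := by
      rw [← ENNReal.ofReal_add (by positivity) (by positivity), ← ENNReal.ofReal_one]
      apply ENNReal.ofReal_le_ofReal
      have h1 : (1 - l) ^ n ≤ 1 - l := by
        apply pow_le_of_le_one hf0.le (by linarith) hn
      have h2 : l ^ n ≤ l := by
        apply pow_le_of_le_one hl0.le hl1.le hn
      linarith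
    rcases le_or_gt t 0 with ht | ht
    · -- all three sets are the whole space
      have huniv : ∀ Y : Set 𝔼, {x : 𝔼 | t ≤ wf Y x} = Set.univ := fun Y =>
        Set.eq_univ_of_forall fun x => le_trans ht (wf_pos Y x).le
      rw [huniv K, huniv L, huniv M]
      calc ENNReal.ofReal ((1 - l) ^ n) * volume (Set.univ : Set 𝔼) +
            ENNReal.ofReal (l ^ n) * volume (Set.univ : Set 𝔼)
          = (ENNReal.ofReal ((1 - l) ^ n) + ENNReal.ofReal (l ^ n)) *
            volume (Set.univ : Set 𝔼) := by rw [add_mul]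
        _ ≤ 1 * volume (Set.univ : Set 𝔼) := by gcongr
        _ = volume (Set.univ : Set 𝔼) := one_mul _
    rcases le_or_gt t 1 with ht1 | ht1
    · -- the main case: level sets are Minkowski sums with closed balls
      set ρ : ℝ := Real.sqrt (Real.log t⁻¹ / π) with hρ
      rw [levelSet_eq hK₁ hK₃ ht ht1, levelSet_eq hL₁ hL₃ ht ht1,
        levelSet_eq hM₁ hM₃ ht ht1]
      have hset : (1 - l) • (K + Metric.closedBall 0 ρ) + l • (L + Metric.closedBall 0 ρ) =
          M + Metric.closedBall 0 ρ := smul_add_cball hf0.le hl0.le (by ring) K L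
      have hKc : IsCompact ((1 - l) • (K + Metric.closedBall 0 ρ)) :=
        (hK₁.add (isCompact_closedBall 0 ρ)).smul _
      have hLc : IsCompact (l • (L + Metric.closedBall 0 ρ)) :=
        (hL₁.add (isCompact_closedBall 0 ρ)).smul _
      have hKne : ((1 - l) • (K + Metric.closedBall 0 ρ)).Nonempty :=
        (hK₃.add ⟨0, mem_closedBall_self (Real.sqrt_nonneg _)⟩).smul_set
      have hLne : (l • (L + Metric.closedBall 0 ρ)).Nonempty :=
        (hL₃.add ⟨0, mem_closedBall_self (Real.sqrt_nonneg _)⟩).smul_set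
      calc ENNReal.ofReal ((1 - l) ^ n) * volume (K + Metric.closedBall 0 ρ) +
            ENNReal.ofReal (l ^ n) * volume (L + Metric.closedBall 0 ρ)
          = volume ((1 - l) • (K + Metric.closedBall 0 ρ)) +
            volume (l • (L + Metric.closedBall 0 ρ)) := by
            rw [Measure.addHaar_smul, Measure.addHaar_smul, finrank_euclideanSpace_fin,
              abs_of_nonneg (by positivity : (0:ℝ) ≤ (1 - l) ^ n),
              abs_of_nonneg (by positivity : (0:ℝ) ≤ l ^ n)]
        _ ≤ volume ((1 - l) • (K + Metric.closedBall 0 ρ) +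
              l • (L + Metric.closedBall 0 ρ)) :=
            volume_add_volume_le hn hKc hLc hKne hLne
        _ = volume (M + Metric.closedBall 0 ρ) := by rw [hset]
    · -- `t > 1`: all level sets are empty
      have hempty : ∀ Y : Set 𝔼, {x : 𝔼 | t ≤ wf Y x} = ∅ := fun Y => by
        apply Set.eq_empty_iff_forall_notMem.2
        intro x hx
        exact absurd (le_trans hx (wf_le_one Y x)) (not_le.2 ht1)
      rw [hempty K, hempty L]
      simp
  -- integrate the pointwise inequality
  have hmeasK : Measurable fun t : ℝ => volume {x : 𝔼 | t ≤ wf K x} :=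
    Antitone.measurable fun s t hst => measure_mono fun x hx => le_trans hst hx
  have hmeasL : Measurable fun t : ℝ => volume {x : 𝔼 | t ≤ wf L x} :=
    Antitone.measurable fun s t hst => measure_mono fun x hx => le_trans hst hx
  rw [willsL_eq_layer K, willsL_eq_layer L, willsL_eq_layer M]
  rw [← lintegral_const_mul _ hmeasK, ← lintegral_const_mul _ hmeasL,
    ← lintegral_add_left (hmeasK.const_mul _)]
  exact lintegral_mono fun t => hpt t

end WillsAux

lemma two_pow_pred_le_factorial : ∀ n : ℕ, 2 ^ (n - 1) ≤ n.factorial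
  | 0 => by norm_num
  | 1 => by norm_num
  | (n + 2) => by
      have ih := two_pow_pred_le_factorial (n + 1)
      have h1 : (2:ℕ) ^ (n + 2 - 1) = 2 * 2 ^ (n + 1 - 1) := by
        simp [pow_succ]; ring
      rw [h1, Nat.factorial_succ]
      have h2 : (2:ℕ) ≤ n + 2 := by omega
      exact Nat.mul_le_mul h2 ih


set_option maxHeartbeats 1000000 in
open WillsAux in
/-- Brunn-Minkowski type inequality with constant `1/(n!)^{1/n}`:
`W((1-λ)K + λL)^{1/n} ≥ (1/(n!)^{1/n}) ((1-λ) W(K)^{1/n} + λ W(L)^{1/n})`. -/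
theorem wills_brunn_minkowski_constant {n : ℕ} (K L : Set (EuclideanSpace ℝ (Fin n)))
    (hK₁ : IsCompact K) (hK₂ : Convex ℝ K) (hK₃ : K.Nonempty)
    (hL₁ : IsCompact L) (hL₂ : Convex ℝ L) (hL₃ : L.Nonempty)
    {l : ℝ} (hl : l ∈ Set.Ioo (0 : ℝ) 1) :
    wills ((1 - l) • K + l • L) ^ ((1 : ℝ) / n) ≥
      (1 / (n.factorial : ℝ) ^ ((1 : ℝ) / n)) *
        ((1 - l) * wills K ^ ((1 : ℝ) / n) + l * wills L ^ ((1 : ℝ) / n)) := by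
  obtain ⟨hl0, hl1⟩ := hl
  rcases eq_or_ne n 0 with rfl | hn
  · norm_num [Real.rpow_zero]
  -- main case
  have hf0 : (0:ℝ) < 1 - l := by linarith
  set M : Set (EuclideanSpace ℝ (Fin n)) := (1 - l) • K + l • L with hMdef
  have hM₁ : IsCompact M := (hK₁.smul (1 - l)).add (hL₁.smul l)
  have hM₃ : M.Nonempty := (hK₃.smul_set).add (hL₃.smul_set)
  have ha0 : (0:ℝ) ≤ wills K := integral_nonneg fun x => (Real.exp_pos _).le
  have hb0 : (0:ℝ) ≤ wills L := integral_nonneg fun x => (Real.exp_pos _).le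
  -- the key inequality `W(M) ≥ (1-l)^n W(K) + l^n W(L)`
  have hkey : (1 - l) ^ n * wills K + l ^ n * wills L ≤ wills M := by
    have h := willsL_combo hn hK₁ hK₃ hL₁ hL₃ hl0 hl1
    have hfinM := willsL_lt_top hM₁ hM₃
    have hfinK := willsL_lt_top hK₁ hK₃
    have hfinL := willsL_lt_top hL₁ hL₃
    have h1 : (ENNReal.ofReal ((1 - l) ^ n) * willsL K +
        ENNReal.ofReal (l ^ n) * willsL L).toReal ≤ (willsL M).toReal :=
      ENNReal.toReal_mono hfinM.ne h
    rw [ENNReal.toReal_add (ENNReal.mul_ne_top ENNReal.ofReal_ne_top hfinK.ne)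
        (ENNReal.mul_ne_top ENNReal.ofReal_ne_top hfinL.ne),
      ENNReal.toReal_mul, ENNReal.toReal_mul,
      ENNReal.toReal_ofReal (by positivity), ENNReal.toReal_ofReal (by positivity)] at h1
    rw [wills_eq_toReal K, wills_eq_toReal L, wills_eq_toReal M]
    exact h1
  have hm0 : (0:ℝ) ≤ wills M := le_trans (by positivity) hkey
  set x : ℝ := (1 - l) * wills K ^ ((1:ℝ)/n) with hxdef
  set y : ℝ := l * wills L ^ ((1:ℝ)/n) with hydef
  have hx0 : 0 ≤ x := mul_nonneg hf0.le (Real.rpow_nonneg ha0 _)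
  have hy0 : 0 ≤ y := mul_nonneg hl0.le (Real.rpow_nonneg hb0 _)
  have hnn : ((n:ℝ)) ≠ 0 := Nat.cast_ne_zero.2 hn
  have hxn : x ^ n = (1 - l) ^ n * wills K := by
    rw [hxdef, mul_pow, ← Real.rpow_natCast (wills K ^ ((1:ℝ)/n)) n, ← Real.rpow_mul ha0,
      one_div, inv_mul_cancel₀ hnn, Real.rpow_one]
  have hyn : y ^ n = l ^ n * wills L := by
    rw [hydef, mul_pow, ← Real.rpow_natCast (wills L ^ ((1:ℝ)/n)) n, ← Real.rpow_mul hb0,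
      one_div, inv_mul_cancel₀ hnn, Real.rpow_one]
  have hfact : ((2:ℝ)) ^ (n - 1) ≤ (n.factorial : ℝ) := by
    exact_mod_cast two_pow_pred_le_factorial n
  have hstep : (x + y) ^ n ≤ (n.factorial : ℝ) * wills M := by
    calc (x + y) ^ n ≤ 2 ^ (n - 1) * (x ^ n + y ^ n) := add_pow_le hx0 hy0 n
      _ ≤ (n.factorial : ℝ) * (x ^ n + y ^ n) := by
          apply mul_le_mul_of_nonneg_right hfact (by positivity)
      _ ≤ (n.factorial : ℝ) * wills M := by
          apply mul_le_mul_of_nonneg_left _ (Nat.cast_nonneg _)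
          rw [hxn, hyn]; exact hkey
  have hroot : x + y ≤ ((n.factorial : ℝ) * wills M) ^ ((1:ℝ)/n) := by
    have hxy0 : (0:ℝ) ≤ (x + y) ^ n := by positivity
    have h2 := Real.rpow_le_rpow hxy0 hstep (by positivity : (0:ℝ) ≤ 1/(n:ℝ))
    rwa [one_div, Real.pow_rpow_inv_natCast (by positivity : (0:ℝ) ≤ x + y) hn, ← one_div] at h2
  rw [Real.mul_rpow (Nat.cast_nonneg _) hm0] at hroot
  have hfpos : (0:ℝ) < (n.factorial : ℝ) ^ ((1:ℝ)/n) :=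
    Real.rpow_pos_of_pos (by exact_mod_cast n.factorial_pos) _
  rw [ge_iff_le]
  calc (1 / (n.factorial : ℝ) ^ ((1:ℝ)/n)) * (x + y)
      ≤ (1 / (n.factorial : ℝ) ^ ((1:ℝ)/n)) *
        ((n.factorial : ℝ) ^ ((1:ℝ)/n) * wills M ^ ((1:ℝ)/n)) := by
        apply mul_le_mul_of_nonneg_left hroot (by positivity)
    _ = wills M ^ ((1:ℝ)/n) := by
        field_simp
end

section
/- Let K, L ⊆ ℝⁿ be convex bodies with K ∩ L ≠ ∅. Then W(K ∩ L) · W((K − L)/2) ≤ 2ⁿ · W(K) · W(L), where K − L = K + (−L) is the Minkowski difference body. In particular, W(K − K) ≤ 2ⁿ · W(2K). -/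
open scoped Pointwise ENNReal
open MeasureTheory Metric Real

namespace WillsRS

variable {n : ℕ}

/-- The integrand of the Wills functional. -/
noncomputable abbrev wfn (A : Set (EuclideanSpace ℝ (Fin n)))
    (x : EuclideanSpace ℝ (Fin n)) : ℝ :=
  Real.exp (-π * (Metric.infDist x A) ^ 2)

lemma wfn_cont (A : Set (EuclideanSpace ℝ (Fin n))) : Continuous (wfn A) :=
  Real.continuous_exp.comp (continuous_const.mul ((continuous_infDist_pt A).pow 2))

lemma wfn_nonneg (A : Set (EuclideanSpace ℝ (Fin n))) (x : EuclideanSpace ℝ (Fin n)) :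
    0 ≤ wfn A x := (Real.exp_pos _).le

lemma gauss_int (b : ℝ) (hb : 0 < b) :
    Integrable (fun x : EuclideanSpace ℝ (Fin n) => Real.exp (-b * ‖x‖ ^ 2)) := by
  have h := (GaussianFourier.integrable_cexp_neg_mul_sq_norm_add
    (V := EuclideanSpace ℝ (Fin n)) (b := (b : ℂ)) (by simpa using hb) 0 0).norm
  refine h.congr ?_
  filter_upwards with v
  rw [Complex.norm_exp]
  norm_num
  left
  norm_cast

lemma wfn_integrable {A : Set (EuclideanSpace ℝ (Fin n))} (hA : IsCompact A)
    (hne : A.Nonempty) : Integrable (wfn A) := by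
  obtain ⟨R, hR⟩ := hA.isBounded.subset_closedBall 0
  refine Integrable.mono' ((gauss_int (π/2) (by positivity)).const_mul (Real.exp (π * R ^ 2)))
    (wfn_cont A).aestronglyMeasurable ?_
  filter_upwards with x
  rw [Real.norm_of_nonneg (wfn_nonneg A x), ← Real.exp_add]
  apply Real.exp_le_exp.2
  have hd0 : 0 ≤ infDist x A := infDist_nonneg
  have hdR : ‖x‖ - R ≤ infDist x A := by
    obtain ⟨y, hy, hxy⟩ := hA.exists_infDist_eq_dist hne x
    have hyR : ‖y‖ ≤ R := by simpa [Metric.mem_closedBall, dist_eq_norm] using hR hy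
    have h2 := norm_sub_norm_le x y
    rw [← dist_eq_norm] at h2
    rw [hxy]
    linarith
  have hR0 : 0 ≤ R := by
    obtain ⟨a, ha⟩ := hne
    have : ‖a‖ ≤ R := by simpa [Metric.mem_closedBall, dist_eq_norm] using hR ha
    have := norm_nonneg a; linarith
  have hπ := Real.pi_pos
  rcases le_or_gt ‖x‖ R with h | h
  · have hxR2 : ‖x‖ ^ 2 ≤ R ^ 2 := by nlinarith [norm_nonneg x]
    nlinarith [mul_le_mul_of_nonneg_left hxR2 hπ.le,
      mul_nonneg hπ.le (sq_nonneg (infDist x A)), mul_nonneg hπ.le (sq_nonneg ‖x‖)]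
  · have h3 : (‖x‖ - R) ^ 2 ≤ infDist x A ^ 2 := by
      have h0 : (0:ℝ) ≤ ‖x‖ - R := by linarith
      exact pow_le_pow_left₀ h0 hdR 2
    nlinarith [mul_le_mul_of_nonneg_left h3 hπ.le,
      mul_nonneg hπ.le (sq_nonneg (‖x‖ - 2 * R))]

/-- The Wills functional as a lower Lebesgue integral. -/
noncomputable abbrev lintW (A : Set (EuclideanSpace ℝ (Fin n))) : ℝ≥0∞ :=
  ∫⁻ x, ENNReal.ofReal (wfn A x)

lemma wills_eq_toReal (A : Set (EuclideanSpace ℝ (Fin n))) :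
    wills A = (lintW A).toReal := by
  rw [wills, integral_eq_lintegral_of_nonneg_ae
    (Filter.Eventually.of_forall fun x => wfn_nonneg A x) (wfn_cont A).aestronglyMeasurable]

lemma lintW_ne_top {A : Set (EuclideanSpace ℝ (Fin n))} (hA : IsCompact A)
    (hne : A.Nonempty) : lintW A ≠ ⊤ :=
  (wfn_integrable hA hne).lintegral_lt_top.ne

/-- The core geometric/pointwise inequality, coming from the parallelogram law
and convexity of `K` and `L`. -/
lemma core_pointwise {K L : Set (EuclideanSpace ℝ (Fin n))}
    (hK₂ : Convex ℝ K) (hL₂ : Convex ℝ L)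
    (hKLc : IsCompact (K ∩ L)) (hKLne : (K ∩ L).Nonempty)
    {b c : EuclideanSpace ℝ (Fin n)} (hb : b ∈ K) (hc : c ∈ L)
    (v x : EuclideanSpace ℝ (Fin n)) :
    Real.exp (-(2*π) * (infDist (x - ((2:ℝ)⁻¹ • v + (4:ℝ)⁻¹ • (b + c)))
        ((2:ℝ)⁻¹ • (K ∩ L))) ^ 2) *
      Real.exp (-(π/2) * (dist v ((2:ℝ)⁻¹ • (b - c))) ^ 2)
      ≤ wfn K x * wfn L (x - v) := by
  set σ := (2:ℝ)⁻¹ • v + (4:ℝ)⁻¹ • (b + c) with hσ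
  set N := (2:ℝ)⁻¹ • (K ∩ L) with hN
  have hNc : IsCompact N := by
    rw [hN, ← Set.image_smul]
    exact hKLc.image (continuous_const_smul _)
  have hNne : N.Nonempty := hKLne.smul_set
  obtain ⟨y, hyN, hy⟩ := hNc.exists_infDist_eq_dist hNne (x - σ)
  rw [hN] at hyN
  obtain ⟨a, haKL, rfl⟩ := Set.mem_smul_set.1 hyN
  set p := x - σ - (2:ℝ)⁻¹ • a with hpdef
  set δ := (2:ℝ)⁻¹ • v - (4:ℝ)⁻¹ • (b - c) with hδdef
  have hp : ‖p‖ = infDist (x - σ) N := by rw [hy, dist_eq_norm]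
  have hδ : ‖δ‖ = 2⁻¹ * dist v ((2:ℝ)⁻¹ • (b - c)) := by
    have h1 : δ = (2:ℝ)⁻¹ • (v - (2:ℝ)⁻¹ • (b - c)) := by
      rw [hδdef]; module
    rw [h1, norm_smul, dist_eq_norm]
    norm_num
  have memK : (2:ℝ)⁻¹ • a + (2:ℝ)⁻¹ • b ∈ K :=
    hK₂ haKL.1 hb (by norm_num) (by norm_num) (by norm_num)
  have memL : (2:ℝ)⁻¹ • a + (2:ℝ)⁻¹ • c ∈ L :=
    hL₂ haKL.2 hc (by norm_num) (by norm_num) (by norm_num)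
  have hdK : infDist x K ≤ ‖p + δ‖ := by
    have hid : x - ((2:ℝ)⁻¹ • a + (2:ℝ)⁻¹ • b) = p + δ := by
      rw [hpdef, hδdef, hσ]; module
    calc infDist x K ≤ dist x ((2:ℝ)⁻¹ • a + (2:ℝ)⁻¹ • b) := infDist_le_dist_of_mem memK
      _ = ‖p + δ‖ := by rw [dist_eq_norm, hid]
  have hdL : infDist (x - v) L ≤ ‖p - δ‖ := by
    have hid : (x - v) - ((2:ℝ)⁻¹ • a + (2:ℝ)⁻¹ • c) = p - δ := by
      rw [hpdef, hδdef, hσ]; module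
    calc infDist (x - v) L ≤ dist (x - v) ((2:ℝ)⁻¹ • a + (2:ℝ)⁻¹ • c) :=
          infDist_le_dist_of_mem memL
      _ = ‖p - δ‖ := by rw [dist_eq_norm, hid]
  have par := parallelogram_law_with_norm ℝ p δ
  have h1 : (infDist x K) ^ 2 ≤ ‖p + δ‖ ^ 2 := pow_le_pow_left₀ infDist_nonneg hdK 2
  have h2 : (infDist (x - v) L) ^ 2 ≤ ‖p - δ‖ ^ 2 := pow_le_pow_left₀ infDist_nonneg hdL 2
  have hsum : (infDist x K) ^ 2 + (infDist (x - v) L) ^ 2 ≤ 2 * ‖p‖ ^ 2 + 2 * ‖δ‖ ^ 2 := by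
    linarith
  rw [wfn, wfn, ← Real.exp_add, ← Real.exp_add]
  apply Real.exp_le_exp.2
  have hδ2 : ‖δ‖ ^ 2 = 4⁻¹ * (dist v ((2:ℝ)⁻¹ • (b - c))) ^ 2 := by
    rw [hδ]; ring
  rw [← hp]
  nlinarith [Real.pi_pos, hsum, hδ2]

/-- The scaling step: `W(S) ≤ 2ⁿ ∫ e^{-2π d(u, S/2)²} du`. -/
lemma scale_half (S : Set (EuclideanSpace ℝ (Fin n))) :
    lintW S ≤ ENNReal.ofReal ((2:ℝ) ^ n) *
      ∫⁻ u, ENNReal.ofReal (Real.exp (-(2*π) * (infDist u ((2:ℝ)⁻¹ • S)) ^ 2)) := by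
  set g : EuclideanSpace ℝ (Fin n) → ℝ≥0∞ :=
    fun u => ENNReal.ofReal (Real.exp (-(2*π) * (infDist u ((2:ℝ)⁻¹ • S)) ^ 2)) with hg
  have hgm : Measurable g :=
    (ENNReal.continuous_ofReal.comp (Real.continuous_exp.comp
      (continuous_const.mul ((continuous_infDist_pt _).pow 2)))).measurable
  have hmap : ∫⁻ x, g ((2:ℝ)⁻¹ • x) = ENNReal.ofReal ((2:ℝ) ^ n) * ∫⁻ u, g u := by
    have h1 := Measure.map_addHaar_smul (volume : Measure (EuclideanSpace ℝ (Fin n)))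
      (r := (2:ℝ)⁻¹) (by norm_num)
    rw [← lintegral_map hgm (measurable_const_smul _), h1, lintegral_smul_measure]
    congr 1
    rw [finrank_euclideanSpace_fin]
    congr 1
    rw [abs_of_nonneg (by positivity)]
    simp [inv_pow]
  rw [← hmap]
  refine lintegral_mono fun x => ?_
  have hsc : infDist ((2:ℝ)⁻¹ • x) ((2:ℝ)⁻¹ • S) = 2⁻¹ * infDist x S := by
    rw [infDist_smul₀ (by norm_num : ((2:ℝ)⁻¹) ≠ 0) S x]
    norm_num
  rw [hg]
  simp only
  rw [hsc]
  apply ENNReal.ofReal_le_ofReal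
  apply Real.exp_le_exp.2
  nlinarith [Real.pi_pos, sq_nonneg (infDist x S), infDist_nonneg (s := S) (x := x)]

/-- Fubini/translation step: `W(K)·W(L)` as a double integral. -/
lemma fubini_step (K L : Set (EuclideanSpace ℝ (Fin n))) :
    lintW K * lintW L =
      ∫⁻ v, ∫⁻ x, ENNReal.ofReal (wfn K x) * ENNReal.ofReal (wfn L (x - v)) := by
  have hKm : Measurable fun x => ENNReal.ofReal (wfn K x) :=
    (ENNReal.continuous_ofReal.comp (wfn_cont K)).measurable
  have hLm : Measurable fun x => ENNReal.ofReal (wfn L x) :=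
    (ENNReal.continuous_ofReal.comp (wfn_cont L)).measurable
  have hswap : AEMeasurable (Function.uncurry fun x v =>
      ENNReal.ofReal (wfn K x) * ENNReal.ofReal (wfn L (x - v)))
      ((volume : Measure (EuclideanSpace ℝ (Fin n))).prod volume) := by
    apply Measurable.aemeasurable
    exact ((hKm.comp measurable_fst).mul
      (hLm.comp (measurable_fst.sub measurable_snd)))
  calc lintW K * lintW L
      = ∫⁻ x, ENNReal.ofReal (wfn K x) * lintW L := (lintegral_mul_const _ hKm).symm
    _ = ∫⁻ x, ∫⁻ v, ENNReal.ofReal (wfn K x) * ENNReal.ofReal (wfn L (x - v)) := by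
        refine lintegral_congr fun x => ?_
        have hm : Measurable fun v : EuclideanSpace ℝ (Fin n) =>
            ENNReal.ofReal (wfn L (x - v)) := hLm.comp (measurable_const.sub measurable_id)
        rw [lintegral_const_mul _ hm]
        congr 1
        exact ((Measure.measurePreserving_sub_left volume x).lintegral_comp hLm).symm
    _ = ∫⁻ v, ∫⁻ x, ENNReal.ofReal (wfn K x) * ENNReal.ofReal (wfn L (x - v)) :=
        lintegral_lintegral_swap hswap

/-- The main chain, at the level of lower Lebesgue integrals. -/
lemma core_chain {K L : Set (EuclideanSpace ℝ (Fin n))}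
    (hK₁ : IsCompact K) (hK₂ : Convex ℝ K)
    (hL₁ : IsCompact L) (hL₂ : Convex ℝ L)
    (hKL : (K ∩ L).Nonempty) :
    lintW (K ∩ L) * lintW ((2:ℝ)⁻¹ • (K - L)) ≤
      ENNReal.ofReal ((2:ℝ) ^ n) * (lintW K * lintW L) := by
  set M := (2:ℝ)⁻¹ • (K - L) with hM
  set N := (2:ℝ)⁻¹ • (K ∩ L) with hN
  set C0 : ℝ≥0∞ := ∫⁻ u, ENNReal.ofReal (Real.exp (-(2*π) * (infDist u N) ^ 2)) with hC0
  have hKLc : IsCompact (K ∩ L) := hK₁.inter_right hL₁.isClosed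
  have hsubc : IsCompact (K - L) := by
    rw [← Set.sub_image_prod]
    exact (hK₁.prod hL₁).image (continuous_fst.sub continuous_snd)
  have hMc : IsCompact M := by
    rw [hM, ← Set.image_smul]
    exact hsubc.image (continuous_const_smul _)
  have hMne : M.Nonempty := by
    obtain ⟨z, hz⟩ := hKL
    exact (Set.Nonempty.sub ⟨z, hz.1⟩ ⟨z, hz.2⟩).smul_set
  have hgN : Measurable fun u : EuclideanSpace ℝ (Fin n) =>
      ENNReal.ofReal (Real.exp (-(2*π) * (infDist u N) ^ 2)) :=
    (ENNReal.continuous_ofReal.comp (Real.continuous_exp.comp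
      (continuous_const.mul ((continuous_infDist_pt _).pow 2)))).measurable
  -- key fiber estimate
  have key : ∀ v : EuclideanSpace ℝ (Fin n),
      ENNReal.ofReal (Real.exp (-(π/2) * (infDist v M) ^ 2)) * C0 ≤
        ∫⁻ x, ENNReal.ofReal (wfn K x) * ENNReal.ofReal (wfn L (x - v)) := by
    intro v
    obtain ⟨m, hmM, hvm⟩ := hMc.exists_infDist_eq_dist hMne v
    rw [hM] at hmM
    obtain ⟨w, hw, hwm⟩ := Set.mem_smul_set.1 hmM
    obtain ⟨b, hb, c, hc, rfl⟩ := Set.mem_sub.1 hw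
    set σ := (2:ℝ)⁻¹ • v + (4:ℝ)⁻¹ • (b + c) with hσ
    have htrans : ∫⁻ x, ENNReal.ofReal (Real.exp (-(2*π) * (infDist (x - σ) N) ^ 2)) = C0 := by
      rw [hC0]
      exact lintegral_sub_right_eq_self
        (fun u => ENNReal.ofReal (Real.exp (-(2*π) * (infDist u N) ^ 2))) σ
    calc ENNReal.ofReal (Real.exp (-(π/2) * (infDist v M) ^ 2)) * C0
        = ∫⁻ x, ENNReal.ofReal (Real.exp (-(π/2) * (infDist v M) ^ 2)) *
            ENNReal.ofReal (Real.exp (-(2*π) * (infDist (x - σ) N) ^ 2)) := by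
          have hm2 : Measurable fun x : EuclideanSpace ℝ (Fin n) =>
              ENNReal.ofReal (Real.exp (-(2*π) * (infDist (x - σ) N) ^ 2)) :=
            hgN.comp (measurable_id.sub measurable_const)
          rw [lintegral_const_mul _ hm2, htrans]
      _ ≤ ∫⁻ x, ENNReal.ofReal (wfn K x) * ENNReal.ofReal (wfn L (x - v)) := by
          refine lintegral_mono fun x => ?_
          rw [← ENNReal.ofReal_mul (Real.exp_pos _).le, ← ENNReal.ofReal_mul (wfn_nonneg K x)]
          apply ENNReal.ofReal_le_ofReal
          have hdist : infDist v M = dist v ((2:ℝ)⁻¹ • (b - c)) := by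
            rw [hvm, ← hwm]
          rw [hdist, mul_comm]
          exact core_pointwise hK₂ hL₂ hKLc hKL hb hc v x
  -- assemble
  have hstep1 : lintW M * C0 ≤ lintW K * lintW L := by
    rw [fubini_step K L]
    have h2 : lintW M * C0 ≤ ∫⁻ v, ENNReal.ofReal (Real.exp (-(π/2) * (infDist v M) ^ 2)) * C0 := by
      have hm3 : Measurable fun v : EuclideanSpace ℝ (Fin n) =>
          ENNReal.ofReal (Real.exp (-(π/2) * (infDist v M) ^ 2)) :=
        (ENNReal.continuous_ofReal.comp (Real.continuous_exp.comp
          (continuous_const.mul ((continuous_infDist_pt _).pow 2)))).measurable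
      rw [lintegral_mul_const _ hm3]
      apply mul_le_mul_left
      refine lintegral_mono fun v => ?_
      apply ENNReal.ofReal_le_ofReal
      apply Real.exp_le_exp.2
      nlinarith [Real.pi_pos, sq_nonneg (infDist v M)]
    exact h2.trans (lintegral_mono key)
  have hstep2 : lintW (K ∩ L) ≤ ENNReal.ofReal ((2:ℝ) ^ n) * C0 := scale_half (K ∩ L)
  calc lintW (K ∩ L) * lintW M ≤ (ENNReal.ofReal ((2:ℝ) ^ n) * C0) * lintW M :=
        mul_le_mul_left hstep2 _
    _ = ENNReal.ofReal ((2:ℝ) ^ n) * (lintW M * C0) := by ring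
    _ ≤ ENNReal.ofReal ((2:ℝ) ^ n) * (lintW K * lintW L) := mul_le_mul_right hstep1 _

/-- Part 1 of the theorem, in real form. -/
lemma main1 {K L : Set (EuclideanSpace ℝ (Fin n))}
    (hK₁ : IsCompact K) (hK₂ : Convex ℝ K) (hK₃ : K.Nonempty)
    (hL₁ : IsCompact L) (hL₂ : Convex ℝ L) (hL₃ : L.Nonempty)
    (hKL : (K ∩ L).Nonempty) :
    wills (K ∩ L) * wills ((2:ℝ)⁻¹ • (K - L)) ≤ (2:ℝ) ^ n * (wills K * wills L) := by
  have hch := core_chain hK₁ hK₂ hL₁ hL₂ hKL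
  have hfin : ENNReal.ofReal ((2:ℝ) ^ n) * (lintW K * lintW L) ≠ ⊤ :=
    ENNReal.mul_ne_top ENNReal.ofReal_ne_top
      (ENNReal.mul_ne_top (lintW_ne_top hK₁ hK₃) (lintW_ne_top hL₁ hL₃))
  have h := ENNReal.toReal_mono hfin hch
  rw [ENNReal.toReal_mul, ENNReal.toReal_mul, ENNReal.toReal_mul,
    ENNReal.toReal_ofReal (by positivity : (0:ℝ) ≤ (2:ℝ) ^ n)] at h
  rw [wills_eq_toReal, wills_eq_toReal, wills_eq_toReal, wills_eq_toReal]
  exact h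

lemma half_smul_sub_self (K : Set (EuclideanSpace ℝ (Fin n))) :
    (2:ℝ)⁻¹ • ((2:ℝ) • K - (2:ℝ) • K) = K - K := by
  ext u
  constructor
  · rintro ⟨w, hw, rfl⟩
    obtain ⟨p, hp, q, hq, rfl⟩ := Set.mem_sub.1 hw
    obtain ⟨k1, hk1, rfl⟩ := Set.mem_smul_set.1 hp
    obtain ⟨k2, hk2, rfl⟩ := Set.mem_smul_set.1 hq
    have hid : (2:ℝ)⁻¹ • ((2:ℝ) • k1 - (2:ℝ) • k2) = k1 - k2 := by module
    show (2:ℝ)⁻¹ • ((2:ℝ) • k1 - (2:ℝ) • k2) ∈ K - K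
    rw [hid]
    exact Set.sub_mem_sub hk1 hk2
  · rintro ⟨k1, hk1, k2, hk2, rfl⟩
    refine ⟨(2:ℝ) • k1 - (2:ℝ) • k2,
      Set.sub_mem_sub (Set.smul_mem_smul_set hk1) (Set.smul_mem_smul_set hk2), by module⟩

end WillsRS

open WillsRS in
/-- For convex bodies `K, L ⊆ ℝⁿ` with `K ∩ L ≠ ∅`,
`W(K ∩ L) W((K - L)/2) ≤ 2ⁿ W(K) W(L)`, where `K - L = K + (-L)` is the Minkowski
difference body. In particular, `W(K - K) ≤ 2ⁿ W(2K)`. -/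
theorem wills_rogers_shephard {n : ℕ} (K L : Set (EuclideanSpace ℝ (Fin n)))
    (hK₁ : IsCompact K) (hK₂ : Convex ℝ K) (hK₃ : K.Nonempty)
    (hL₁ : IsCompact L) (hL₂ : Convex ℝ L) (hL₃ : L.Nonempty)
    (hKL : (K ∩ L).Nonempty) :
    wills (K ∩ L) * wills ((2 : ℝ)⁻¹ • (K - L)) ≤ (2 : ℝ) ^ n * (wills K * wills L) ∧
      wills (K - K) ≤ (2 : ℝ) ^ n * wills ((2 : ℝ) • K) := by
  constructor
  · exact main1 hK₁ hK₂ hK₃ hL₁ hL₂ hL₃ hKL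
  · -- apply part 1 to the pair (2K, 2K)
    have h2Kc : IsCompact ((2:ℝ) • K) := by
      rw [← Set.image_smul]
      exact hK₁.image (continuous_const_smul _)
    have h2Kconv : Convex ℝ ((2:ℝ) • K) := hK₂.smul _
    have h2Kne : ((2:ℝ) • K).Nonempty := hK₃.smul_set
    have h := main1 h2Kc h2Kconv h2Kne h2Kc h2Kconv h2Kne
      (by rw [Set.inter_self]; exact h2Kne)
    rw [Set.inter_self, half_smul_sub_self] at h
    have hpos : 0 < wills ((2:ℝ) • K) := by
      rw [wills]
      rw [integral_pos_iff_support_of_nonneg (fun x => wfn_nonneg ((2:ℝ) • K) x)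
        (wfn_integrable h2Kc h2Kne)]
      have hsupp : Function.support (wfn ((2:ℝ) • K)) = Set.univ := by
        ext x; simp [Function.mem_support, (Real.exp_pos _).ne']
      rw [hsupp]
      exact isOpen_univ.measure_pos volume ⟨0, trivial⟩
    have h2 : wills ((2:ℝ) • K) * wills (K - K) ≤
        wills ((2:ℝ) • K) * ((2:ℝ) ^ n * wills ((2:ℝ) • K)) := by
      calc wills ((2:ℝ) • K) * wills (K - K) ≤
            (2:ℝ) ^ n * (wills ((2:ℝ) • K) * wills ((2:ℝ) • K)) := h
        _ = wills ((2:ℝ) • K) * ((2:ℝ) ^ n * wills ((2:ℝ) • K)) := by ring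
    exact (mul_le_mul_iff_right₀ hpos).1 h2
end

section
/- Let K, E ⊆ ℝⁿ be convex bodies with 0 ∈ int E and let u ∈ co(ℝ≥0) be strictly increasing. Then ∫_{ℝⁿ} e^{−u(d_E(x,K))} dx = ∫_{u(0)}^{∞} vol(K + u^{−1}(s)·E) · e^{−s} ds, where u^{−1} denotes the inverse function of u, vol is the Lebesgue measure on ℝⁿ, and K + u^{−1}(s)·E is a Minkowski sum. -/
open scoped Pointwise ENNReal
open MeasureTheory Metric Real

/-- The relative distance `d_E(x,K) = min {t ≥ 0 : x ∈ K + tE}`. -/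
noncomputable def distE {V : Type*} [AddCommGroup V] [Module ℝ V] (E K : Set V) (x : V) : ℝ :=
  sInf {t : ℝ | 0 ≤ t ∧ x ∈ K + t • E}

lemma smul_set_mono_of_zero_mem' {V : Type*} [AddCommGroup V] [Module ℝ V]
    {E : Set V} (hE : Convex ℝ E) (h0 : (0 : V) ∈ E) {a b : ℝ} (ha : 0 ≤ a) (hab : a ≤ b) :
    a • E ⊆ b • E := by
  rcases eq_or_lt_of_le (ha.trans hab) with hb | hb
  · have hb0 : b = 0 := hb.symm
    have ha0 : a = 0 := le_antisymm (hb0 ▸ hab) ha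
    simp [ha0, hb0]
  · rintro z ⟨e, he, rfl⟩
    have hb' : b ≠ 0 := ne_of_gt hb
    have : a • e = (a / b) • (b • e) := by
      rw [smul_smul, div_mul_cancel₀ _ hb']
    show a • e ∈ b • E
    rw [this]
    refine (hE.smul b).smul_mem_of_zero_mem ⟨0, h0, smul_zero b⟩
      ⟨e, he, rfl⟩ ⟨by positivity, by rw [div_le_one hb]; exact hab⟩

lemma distE_aux {n : ℕ} {K E : Set (EuclideanSpace ℝ (Fin n))}
    (hK₁ : IsCompact K) (hK₃ : K.Nonempty) (hE₁ : IsCompact E)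
    (hE₃ : (0 : EuclideanSpace ℝ (Fin n)) ∈ interior E) (x : EuclideanSpace ℝ (Fin n)) :
    0 ≤ distE E K x ∧ x ∈ K + distE E K x • E := by
  set S : Set ℝ := {t : ℝ | 0 ≤ t ∧ x ∈ K + t • E} with hS
  have hbdd : BddBelow S := ⟨0, fun y hy => hy.1⟩
  -- S is nonempty
  have hne : S.Nonempty := by
    obtain ⟨k0, hk0⟩ := hK₃
    obtain ⟨ε, hε, hball⟩ := Metric.mem_nhds_iff.1 (mem_interior_iff_mem_nhds.1 hE₃)
    set t0 : ℝ := (‖x - k0‖ + 1) / ε with ht0def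
    have ht0 : 0 < t0 := by positivity
    refine ⟨t0, ht0.le, ?_⟩
    have hb : t0⁻¹ • (x - k0) ∈ ball (0 : EuclideanSpace ℝ (Fin n)) ε := by
      rw [mem_ball_zero_iff, norm_smul, norm_inv, Real.norm_eq_abs, abs_of_pos ht0]
      rw [inv_mul_lt_iff₀ ht0, ht0def, div_mul_eq_mul_div, mul_comm,
        ← div_mul_eq_mul_div, div_self (ne_of_gt hε), one_mul]
      linarith
    have hmem : x - k0 ∈ t0 • E :=
      ⟨t0⁻¹ • (x - k0), hball hb, smul_inv_smul₀ (ne_of_gt ht0) _⟩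
    have : x = k0 + (x - k0) := by abel
    rw [this]
    exact Set.add_mem_add hk0 hmem
  constructor
  · exact Real.sInf_nonneg (fun y hy => hy.1)
  -- the infimum is attained
  obtain ⟨t, -, htt, hts⟩ := exists_seq_tendsto_sInf hne hbdd
  have hmem : ∀ m : ℕ, ∃ kk ∈ K, ∃ ee ∈ E, kk + t m • ee = x := by
    intro m
    obtain ⟨kk, hkk, b, hb, hx⟩ := (hts m).2
    obtain ⟨ee, hee, rfl⟩ := hb
    exact ⟨kk, hkk, ee, hee, hx⟩
  choose k hk e he hke using hmem
  obtain ⟨kl, hkl, φ, hφ, hkconv⟩ := hK₁.tendsto_subseq hk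
  obtain ⟨el, hel, ψ, hψ, heconv⟩ := hE₁.tendsto_subseq (fun m => he (φ m))
  have htφψ : Filter.Tendsto (fun m => t (φ (ψ m))) Filter.atTop (nhds (sInf S)) :=
    htt.comp ((hφ.comp hψ).tendsto_atTop)
  have hkφψ : Filter.Tendsto (fun m => k (φ (ψ m))) Filter.atTop (nhds kl) :=
    hkconv.comp hψ.tendsto_atTop
  have hx : Filter.Tendsto (fun m => k (φ (ψ m)) + t (φ (ψ m)) • e (φ (ψ m)))
      Filter.atTop (nhds (kl + sInf S • el)) :=
    hkφψ.add (htφψ.smul heconv)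
  have hconst : Filter.Tendsto (fun m => k (φ (ψ m)) + t (φ (ψ m)) • e (φ (ψ m)))
      Filter.atTop (nhds x) := by
    simp only [hke]
    exact tendsto_const_nhds
  have hxeq : x = kl + sInf S • el := (tendsto_nhds_unique hconst hx)
  show x ∈ K + sInf S • E
  rw [hxeq]
  exact Set.add_mem_add hkl ⟨el, hel, rfl⟩

lemma distE_le_iff {n : ℕ} {K E : Set (EuclideanSpace ℝ (Fin n))}
    (hK₁ : IsCompact K) (hK₃ : K.Nonempty) (hE₁ : IsCompact E) (hE₂ : Convex ℝ E)
    (hE₃ : (0 : EuclideanSpace ℝ (Fin n)) ∈ interior E) {t : ℝ} (ht : 0 ≤ t)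
    (x : EuclideanSpace ℝ (Fin n)) :
    distE E K x ≤ t ↔ x ∈ K + t • E := by
  obtain ⟨hd0, hdmem⟩ := distE_aux hK₁ hK₃ hE₁ hE₃ x
  constructor
  · intro h
    have hsub : distE E K x • E ⊆ t • E :=
      smul_set_mono_of_zero_mem' hE₂ (interior_subset hE₃) hd0 h
    exact Set.add_subset_add_left hsub hdmem
  · intro h
    exact csInf_le ⟨0, fun y hy => hy.1⟩ ⟨ht, h⟩

/-- For convex bodies `K, E ⊆ ℝⁿ` with `0 ∈ int E` and `u ∈ co(ℝ≥0)`
strictly increasing with inverse `v`,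
`∫_{ℝⁿ} e^{-u(d_E(x,K))} dx = ∫_{u(0)}^∞ vol(K + u⁻¹(s) E) e^{-s} ds`. -/
theorem willsGen_steiner_formula {n : ℕ} (K E : Set (EuclideanSpace ℝ (Fin n)))
    (hK₁ : IsCompact K) (hK₂ : Convex ℝ K) (hK₃ : K.Nonempty)
    (hE₁ : IsCompact E) (hE₂ : Convex ℝ E) (hE₃ : (0 : EuclideanSpace ℝ (Fin n)) ∈ interior E)
    (u : ℝ → ℝ) (hu₁ : ConvexOn ℝ (Set.Ici 0) u) (hu₂ : StrictMonoOn u (Set.Ici 0))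
    (hu₃ : ContinuousOn u (Set.Ici 0))
    (v : ℝ → ℝ) (hv₁ : ∀ t ∈ Set.Ici (0 : ℝ), v (u t) = t)
    (hv₂ : ∀ s ∈ Set.Ici (u 0), 0 ≤ v s ∧ u (v s) = s) :
    ∫ x, Real.exp (-u (distE E K x)) =
      ∫ s in Set.Ici (u 0), (volume (K + v s • E)).toReal * Real.exp (-s) := by
  set d : EuclideanSpace ℝ (Fin n) → ℝ := distE E K with hd
  have hd0 : ∀ x, 0 ≤ d x := fun x => (distE_aux hK₁ hK₃ hE₁ hE₃ x).1
  set w : EuclideanSpace ℝ (Fin n) → ℝ := fun x => u (d x) with hwdef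
  -- sublevel sets of w
  have hsub : ∀ s : ℝ, u 0 ≤ s → {x | w x ≤ s} = K + v s • E := by
    intro s hs
    ext x
    simp only [Set.mem_setOf_eq]
    have h1 : (u (d x) ≤ u (v s)) ↔ d x ≤ v s := hu₂.le_iff_le (hd0 x) (hv₂ s hs).1
    rw [(hv₂ s hs).2] at h1
    exact h1.trans (distE_le_iff hK₁ hK₃ hE₁ hE₂ hE₃ (hv₂ s hs).1 x)
  have hsub' : ∀ s : ℝ, s < u 0 → {x | w x ≤ s} = ∅ := by
    intro s hs
    ext x
    simp only [Set.mem_setOf_eq, Set.mem_empty_iff_false, iff_false, not_le]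
    exact lt_of_lt_of_le hs (hu₂.monotoneOn (Set.mem_Ici.2 le_rfl) (hd0 x) (hd0 x))
  have hcompact : ∀ s : ℝ, IsCompact (K + v s • E) := fun s =>
    hK₁.add (hE₁.smul (v s))
  have hw : Measurable w := by
    apply measurable_of_Iic
    intro s
    rcases le_or_gt (u 0) s with h | h
    · rw [show w ⁻¹' Set.Iic s = K + v s • E from hsub s h]
      exact (hcompact s).measurableSet
    · rw [show w ⁻¹' Set.Iic s = ∅ from hsub' s h]
      exact MeasurableSet.empty
  -- the product function
  set A : Set (EuclideanSpace ℝ (Fin n) × ℝ) := {p | w p.1 ≤ p.2} with hA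
  have hAmeas : MeasurableSet A :=
    measurableSet_le (hw.comp measurable_fst) measurable_snd
  set f : EuclideanSpace ℝ (Fin n) → ℝ → ℝ≥0∞ :=
    fun x s => A.indicator (fun p => ENNReal.ofReal (Real.exp (-p.2))) (x, s) with hf
  have hfmeas : Measurable (Function.uncurry f) := by
    apply Measurable.indicator _ hAmeas
    exact (ENNReal.measurable_ofReal.comp (Real.measurable_exp.comp measurable_snd.neg))
  -- inner integral over s
  have step1 : ∀ x, ∫⁻ s, f x s = ENNReal.ofReal (Real.exp (-(w x))) := by
    intro x
    have heq : ∀ s : ℝ, f x s =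
        (Set.Ici (w x)).indicator (fun s => ENNReal.ofReal (Real.exp (-s))) s := by
      intro s
      simp only [hf, Set.indicator, hA, Set.mem_setOf_eq, Set.mem_Ici]
    simp only [heq]
    rw [lintegral_indicator measurableSet_Ici]
    have hint : IntegrableOn (fun s => Real.exp (-s)) (Set.Ici (w x)) := by
      rw [integrableOn_Ici_iff_integrableOn_Ioi]
      have := exp_neg_integrableOn_Ioi (w x) one_pos
      simpa using this
    rw [← ofReal_integral_eq_lintegral_ofReal hint
      (Filter.Eventually.of_forall fun s => (Real.exp_pos _).le)]
    rw [MeasureTheory.integral_Ici_eq_integral_Ioi, integral_exp_neg_Ioi]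
  -- inner integral over x
  have step2 : ∀ s : ℝ, ∫⁻ x, f x s =
      (Set.Ici (u 0)).indicator
        (fun s => volume (K + v s • E) * ENNReal.ofReal (Real.exp (-s))) s := by
    intro s
    have heq : ∀ x, f x s =
        ({x | w x ≤ s}).indicator (fun _ => ENNReal.ofReal (Real.exp (-s))) x := by
      intro x
      simp only [hf, Set.indicator, hA, Set.mem_setOf_eq]
    simp only [heq]
    rw [lintegral_indicator_const (show MeasurableSet {x | w x ≤ s} from hw measurableSet_Iic)]
    rcases le_or_gt (u 0) s with h | h
    · rw [hsub s h, Set.indicator_of_mem (Set.mem_Ici.2 h), mul_comm]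
    · rw [hsub' s h, Set.indicator_of_notMem (show s ∉ Set.Ici (u 0) from fun hc => absurd (Set.mem_Ici.1 hc) (not_le.2 h))]
      simp
  -- Tonelli
  have key : ∫⁻ x, ENNReal.ofReal (Real.exp (-(w x))) =
      ∫⁻ s in Set.Ici (u 0), volume (K + v s • E) * ENNReal.ofReal (Real.exp (-s)) := by
    calc ∫⁻ x, ENNReal.ofReal (Real.exp (-(w x))) = ∫⁻ x, ∫⁻ s, f x s := by
          simp only [step1]
      _ = ∫⁻ s, ∫⁻ x, f x s := by
          have hae : AEMeasurable (Function.uncurry f)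
              ((volume : Measure (EuclideanSpace ℝ (Fin n))).prod (volume : Measure ℝ)) :=
            hfmeas.aemeasurable
          exact lintegral_lintegral_swap hae
      _ = ∫⁻ s, (Set.Ici (u 0)).indicator
            (fun s => volume (K + v s • E) * ENNReal.ofReal (Real.exp (-s))) s := by
          simp only [step2]
      _ = _ := lintegral_indicator measurableSet_Ici _
  -- measurability of the RHS integrand
  have hg : Measurable (fun s => ∫⁻ x, f x s) := by
    have h2 := Measurable.lintegral_prod_left'
      (μ := (volume : Measure (EuclideanSpace ℝ (Fin n)))) hfmeas
    exact h2
  -- convert LHS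
  have hLHS : ∫ x, Real.exp (-u (distE E K x)) =
      (∫⁻ x, ENNReal.ofReal (Real.exp (-(w x)))).toReal := by
    exact integral_eq_lintegral_of_nonneg_ae (f := fun x => Real.exp (-u (distE E K x)))
      (Filter.Eventually.of_forall fun x => (Real.exp_pos _).le)
      ((Real.measurable_exp.comp hw.neg).aestronglyMeasurable)
  -- convert RHS
  have hfin : ∀ s : ℝ, volume (K + v s • E) < ⊤ := fun s => (hcompact s).measure_lt_top
  have hRHSmeas : AEStronglyMeasurable
      (fun s => (volume (K + v s • E)).toReal * Real.exp (-s))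
      (volume.restrict (Set.Ici (u 0))) := by
    apply (hg.ennreal_toReal.aestronglyMeasurable.restrict).congr
    rw [Filter.eventuallyEq_iff_exists_mem]
    refine ⟨Set.Ici (u 0), self_mem_ae_restrict measurableSet_Ici, ?_⟩
    intro s hs
    show (∫⁻ x, f x s).toReal = (volume (K + v s • E)).toReal * Real.exp (-s)
    rw [step2 s, Set.indicator_of_mem hs, ENNReal.toReal_mul, ENNReal.toReal_ofReal
      (Real.exp_pos _).le]
  have hRHS : ∫ s in Set.Ici (u 0), (volume (K + v s • E)).toReal * Real.exp (-s) =
      (∫⁻ s in Set.Ici (u 0), volume (K + v s • E) * ENNReal.ofReal (Real.exp (-s))).toReal := by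
    rw [integral_eq_lintegral_of_nonneg_ae
      (Filter.Eventually.of_forall fun s => by positivity) hRHSmeas]
    congr 1
    apply setLIntegral_congr_fun measurableSet_Ici
    intro s hs
    dsimp only
    rw [ENNReal.ofReal_mul ENNReal.toReal_nonneg, ENNReal.ofReal_toReal (hfin s).ne]
  rw [hLHS, hRHS, key]
end
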